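/- Let G be a graph, S ⊆ V(G), and T₁,…,T_k a twin partition of V(G). Two vertices u, v ∉ S lie in the same component of G − S if and only if u ∈ T_i, v ∈ T_{i'} where T_i and T_{i'} are reachable in V(G) \ S (with the roles of S and its complement interchanged in the definition of reachability). -/
import Mathlib


variable {V : Type*}

/-- Two vertex sets are adjacent if some edge joins them. -/
def SetsAdj (G : SimpleGraph V) (A B : Set V) : Prop :=
  ∃ a ∈ A, ∃ b ∈ B, G.Adj a b

/-- `u` and `v` are connected inside the induced subgraph `G[S]`. -/
def ReachIn (G : SimpleGraph V) (S : Set V) (u v : V) : Prop :=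
  ∃ (hu : u ∈ S) (hv : v ∈ S), (G.induce S).Reachable ⟨u, hu⟩ ⟨v, hv⟩

/-- `C` is (the vertex set of) a connected component of the induced subgraph `G[S]`. -/
def IsCompOf (G : SimpleGraph V) (S C : Set V) : Prop :=
  ∃ v ∈ S, C = {u | ReachIn G S u v}

/-- A safe set: nonempty, and no component of `G[S]` is adjacent to a larger
component of `G - S`. -/
def IsSafeSet (G : SimpleGraph V) (S : Set V) : Prop :=
  S.Nonempty ∧ ∀ C D : Set V, IsCompOf G S C → IsCompOf G Sᶜ D →
    SetsAdj G C D → D.ncard ≤ C.ncard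

/-- A connected safe set. -/
def IsConnSafeSet (G : SimpleGraph V) (S : Set V) : Prop :=
  IsSafeSet G S ∧ (G.induce S).Connected

/-- The safe number: minimum size of a safe set. -/
noncomputable def sNum (G : SimpleGraph V) : ℕ :=
  sInf {n | ∃ S : Set V, IsSafeSet G S ∧ S.ncard = n}

/-- The connected safe number: minimum size of a connected safe set. -/
noncomputable def csNum (G : SimpleGraph V) : ℕ :=
  sInf {n | ∃ S : Set V, IsConnSafeSet G S ∧ S.ncard = n}

/-- Two vertices are twins if they have the same neighbors, apart from each other. -/
def AreTwins (G : SimpleGraph V) (u v : V) : Prop :=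
  G.neighborSet u \ {v} = G.neighborSet v \ {u}

/-- Two twin sets are adjacent: every vertex of one is adjacent to every
(distinct) vertex of the other. -/
def TwinSetsAdj (G : SimpleGraph V) (A B : Set V) : Prop :=
  ∀ a ∈ A, ∀ b ∈ B, a ≠ b → G.Adj a b

/-- Twin sets `T i` and `T i'` are reachable in `S`: either they are equal and form
a clique, or there is a sequence of twin sets, each meeting `S`, starting at `T i`,
ending at `T i'`, with consecutive sets adjacent. -/
def ReachableTwinSets {k : ℕ} (G : SimpleGraph V) (T : Fin k → Set V) (S : Set V)
    (i i' : Fin k) : Prop :=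
  (i = i' ∧ G.IsClique (T i)) ∨
  ∃ ℓ : ℕ, 1 ≤ ℓ ∧ ∃ f : Fin (ℓ + 1) → Fin k, f 0 = i ∧ f (Fin.last ℓ) = i' ∧
    (∀ j, (T (f j) ∩ S).Nonempty) ∧
    ∀ j : Fin ℓ, TwinSetsAdj G (T (f j.castSucc)) (T (f j.succ))


section AuxStmt18
variable {V : Type*} {G : SimpleGraph V}

lemma twins_step {x a y : V} (h : AreTwins G x a) (hxy : G.Adj x y) (hay : a ≠ y) :
    G.Adj a y := by
  by_cases hxa : x = a
  · subst hxa; exact hxy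
  · have hmem : y ∈ G.neighborSet x \ {a} := ⟨hxy, fun hy => hay (Set.eq_of_mem_singleton hy).symm⟩
    rw [AreTwins] at h
    rw [h] at hmem
    exact hmem.1

lemma adj_spread {x y a b : V} (h1 : AreTwins G x a) (h2 : AreTwins G y b)
    (hxy : G.Adj x y) (hay : a ≠ y) (hab : a ≠ b) : G.Adj a b := by
  have h3 : G.Adj a y := twins_step h1 hxy hay
  exact (twins_step h2 h3.symm hab.symm).symm

lemma clique_of_adj {A : Set V} (htw : ∀ u ∈ A, ∀ v ∈ A, AreTwins G u v)
    {x y : V} (hx : x ∈ A) (hy : y ∈ A) (hxy : G.Adj x y) : G.IsClique A := by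
  have key : ∀ z ∈ A, z ≠ x → G.Adj x z := fun z hz hzx =>
    (twins_step (htw y hy z hz) hxy.symm hzx).symm
  rw [SimpleGraph.isClique_iff]
  intro w hw z hz hne
  by_cases hwx : w = x
  · subst hwx; exact key z hz (Ne.symm hne)
  · by_cases hzx : z = x
    · subst hzx; exact (key w hw hwx).symm
    · exact (twins_step (htw x hx z hz) (key w hw hwx) (Ne.symm hne)).symm

/-- One step of the twin-set reachability relation. -/
def RTS {k : ℕ} (G : SimpleGraph V) (T : Fin k → Set V) (S : Set V) (a b : Fin k) : Prop :=
  (T a ∩ S).Nonempty ∧ (T b ∩ S).Nonempty ∧ TwinSetsAdj G (T a) (T b)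

lemma transGen_of_seq {k : ℕ} {T : Fin k → Set V} {S : Set V} {i i' : Fin k}
    (h : ∃ ℓ : ℕ, 1 ≤ ℓ ∧ ∃ f : Fin (ℓ + 1) → Fin k, f 0 = i ∧ f (Fin.last ℓ) = i' ∧
      (∀ j, (T (f j) ∩ S).Nonempty) ∧
      ∀ j : Fin ℓ, TwinSetsAdj G (T (f j.castSucc)) (T (f j.succ))) :
    Relation.TransGen (RTS G T S) i i' := by
  obtain ⟨ℓ, hℓ, f, h0, hlast, hnon, hadj⟩ := h
  have key : ∀ j : Fin (ℓ + 1), j = 0 ∨ Relation.TransGen (RTS G T S) (f 0) (f j) := by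
    intro j
    induction j using Fin.induction with
    | zero => exact Or.inl rfl
    | succ j ih =>
      right
      have hR : RTS G T S (f j.castSucc) (f j.succ) := ⟨hnon _, hnon _, hadj j⟩
      rcases ih with h0' | htg
      · rw [← h0']
        exact Relation.TransGen.single hR
      · exact htg.tail hR
  rcases key (Fin.last ℓ) with h | h
  · exfalso
    have := congrArg Fin.val h
    simp [Fin.last] at this
    omega
  · rw [h0, hlast] at h; exact h

lemma seq_of_transGen {k : ℕ} {T : Fin k → Set V} {S : Set V} {i i' : Fin k}
    (h : Relation.TransGen (RTS G T S) i i') :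
    ∃ ℓ : ℕ, 1 ≤ ℓ ∧ ∃ f : Fin (ℓ + 1) → Fin k, f 0 = i ∧ f (Fin.last ℓ) = i' ∧
      (∀ j, (T (f j) ∩ S).Nonempty) ∧
      ∀ j : Fin ℓ, TwinSetsAdj G (T (f j.castSucc)) (T (f j.succ)) := by
  induction h with
  | single hR =>
      refine ⟨1, le_refl 1, ![i, _], rfl, rfl, ?_, ?_⟩
      · intro j; fin_cases j
        · exact hR.1
        · exact hR.2.1
      · intro j; fin_cases j
        simpa using hR.2.2
  | @tail b c htg hR ih =>
      obtain ⟨ℓ, hℓ, f, h0, hlast, hnon, hadj⟩ := ih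
      refine ⟨ℓ + 1, by omega, Fin.snoc f c, ?_, ?_, ?_, ?_⟩
      · rw [show (0 : Fin (ℓ + 1 + 1)) = Fin.castSucc 0 from rfl, Fin.snoc_castSucc]
        exact h0
      · rw [Fin.snoc_last]
      · intro j
        induction j using Fin.lastCases with
        | last => rw [Fin.snoc_last]; exact hR.2.1
        | cast j => rw [Fin.snoc_castSucc]; exact hnon j
      · intro j
        induction j using Fin.lastCases with
        | last =>
            simp only [Fin.snoc_castSucc, Fin.succ_last, Fin.snoc_last, hlast]
            exact hR.2.2
        | cast j =>
            simp only [Fin.succ_castSucc, Fin.snoc_castSucc]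
            exact hadj j

lemma reachIn_trans {W : Set V} {x y z : V} (h1 : ReachIn G W x y) (h2 : ReachIn G W y z) :
    ReachIn G W x z := by
  obtain ⟨hx, hy, r1⟩ := h1
  obtain ⟨hy', hz, r2⟩ := h2
  exact ⟨hx, hz, r1.trans r2⟩

lemma reach_step {k : ℕ} {T : Fin k → Set V} {W : Set V} {a b : Fin k}
    (hR : RTS G T W a b) {x y : V} (hx : x ∈ T a) (hxW : x ∈ W)
    (hy : y ∈ T b) (hyW : y ∈ W) : ReachIn G W x y := by
  by_cases hxy : x = y
  · subst hxy; exact ⟨hxW, hxW, SimpleGraph.Reachable.refl _⟩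
  · refine ⟨hxW, hyW, SimpleGraph.Adj.reachable ?_⟩
    exact hR.2.2 x hx y hy hxy

lemma reach_of_transGen {k : ℕ} {T : Fin k → Set V} {W : Set V} {i i' : Fin k}
    (h : Relation.TransGen (RTS G T W) i i')
    {x : V} (hx : x ∈ T i) (hxW : x ∈ W) :
    ∀ y, y ∈ T i' → y ∈ W → ReachIn G W x y := by
  induction h with
  | single hR => exact fun y hy hyW => reach_step hR hx hxW hy hyW
  | tail htg hR ih =>
      intro y hy hyW
      obtain ⟨z, hz, hzW⟩ := hR.1
      exact reachIn_trans (ih z hz hzW) (reach_step hR hz hzW hy hyW)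

lemma walk_key {W : Set V} {k : ℕ} {T : Fin k → Set V}
    (hcover : ∀ v : V, ∃! i, v ∈ T i)
    (htwin : ∀ i, ∀ u ∈ T i, ∀ v ∈ T i, AreTwins G u v) :
    ∀ (x y : W) (_ : (G.induce W).Walk x y) (a b : Fin k),
      (x : V) ∈ T a → (y : V) ∈ T b →
      (a = b ∧ ((x : V) = (y : V) ∨ G.IsClique (T a))) ∨
        Relation.TransGen (RTS G T W) a b := by
  intro x y w
  induction w with
  | nil =>
      intro a b hxa hxb
      exact Or.inl ⟨(hcover _).unique hxa hxb, Or.inl rfl⟩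
  | @cons x' z' y' h p ih =>
      intro a b hxa hyb
      obtain ⟨c, hzc, -⟩ := hcover (z' : V)
      have hadj : G.Adj (x' : V) (z' : V) := h
      by_cases hac : a = c
      · subst hac
        have hcl : G.IsClique (T a) := clique_of_adj (htwin a) hxa hzc hadj
        rcases ih a b hzc hyb with ⟨hab, -⟩ | tg
        · exact Or.inl ⟨hab, Or.inr hcl⟩
        · exact Or.inr tg
      · have hAdjSets : TwinSetsAdj G (T a) (T c) := by
          intro a' ha' b' hb' hne'
          refine adj_spread (htwin a (x' : V) hxa a' ha') (htwin c (z' : V) hzc b' hb')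
            hadj ?_ hne'
          intro hEq
          exact hac ((hcover a').unique ha' (hEq ▸ hzc))
        have hRa : RTS G T W a c := ⟨⟨(x' : V), hxa, x'.2⟩, ⟨(z' : V), hzc, z'.2⟩, hAdjSets⟩
        rcases ih c b hzc hyb with ⟨hcb, -⟩ | tg
        · right; rw [hcb] at hRa; exact Relation.TransGen.single hRa
        · right; exact tg.head hRa

end AuxStmt18

theorem stmt18 (G : SimpleGraph V) (S : Set V) {k : ℕ} (T : Fin k → Set V)
    (hcover : ∀ v : V, ∃! i, v ∈ T i)
    (htwin : ∀ i, ∀ u ∈ T i, ∀ v ∈ T i, AreTwins G u v)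
    (i i' : Fin k) (u v : V)
    (hu : u ∈ T i) (hv : v ∈ T i') (hus : u ∉ S) (hvs : v ∉ S) (huv : u ≠ v) :
    ReachIn G Sᶜ u v ↔ ReachableTwinSets G T Sᶜ i i' := by
  have hconv : ReachableTwinSets G T Sᶜ i i' ↔
      ((i = i' ∧ G.IsClique (T i)) ∨ Relation.TransGen (RTS G T Sᶜ) i i') := by
    unfold ReachableTwinSets
    constructor
    · rintro (h | h)
      · exact Or.inl h
      · exact Or.inr (transGen_of_seq h)
    · rintro (h | h)
      · exact Or.inl h
      · exact Or.inr (seq_of_transGen h)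
  rw [hconv]
  constructor
  · rintro ⟨hu', hv', hr⟩
    obtain ⟨w⟩ := hr
    rcases walk_key hcover htwin ⟨u, hu'⟩ ⟨v, hv'⟩ w i i' hu hv with ⟨hii, h⟩ | tg
    · rcases h with h | hcl
      · exact absurd h huv
      · exact Or.inl ⟨hii, hcl⟩
    · exact Or.inr tg
  · rintro (⟨hii, hcl⟩ | tg)
    · subst hii
      refine ⟨hus, hvs, SimpleGraph.Adj.reachable ?_⟩
      exact hcl hu hv huv
    · exact reach_of_transGen tg hu hus v hv hvs
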